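/- Let Γ = {A_i : i ∈ W} be a partition of V indexed by W, with F : V → W defined by F(x) = i iff x ∈ A_i. Then Γ is a bent partition if and only if for every permutation P of W, P ∘ F is a vectorial bent function from V to W. -/

import Mathlib

/-- Fiber of `Sigma.fst` over `j` in a sigma of `Fin`s is equivalent to `Fin (d j)`. -/
def sigmaFstFib {ι : Type*} (d : ι → ℕ) (j : ι) :
    {s : Σ i, Fin (d i) // s.1 = j} ≃ Fin (d j) where
  toFun s := Fin.cast (congrArg d s.2) s.1.2
  invFun k := ⟨⟨j, k⟩, rfl⟩
  left_inv := fun ⟨⟨i, k⟩, h⟩ => by subst h; rfl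
  right_inv := fun k => rfl

open Classical in
/-- Given prescribed fiber sizes summing to the cardinality, a function with those
fiber sizes exists. -/
lemma existsFun {α ι : Type*} [Fintype α] [Fintype ι] (d : ι → ℕ)
    (hd : ∑ j, d j = Nat.card α) :
    ∃ g : α → ι, ∀ j, Nat.card {x // g x = j} = d j := by
  have e : α ≃ Σ j, Fin (d j) := Fintype.equivOfCardEq
    (by rw [← Nat.card_eq_fintype_card, ← hd, Fintype.card_sigma]; simp)
  refine ⟨fun a => (e a).1, fun j => ?_⟩
  rw [Nat.card_congr ((Equiv.subtypeEquiv e fun _ => Iff.rfl).trans (sigmaFstFib d j))]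
  simp [Nat.card_eq_fintype_card]

open Classical in
/-- Two functions with equinumerous fibers differ by a permutation of the domain. -/
lemma fiberPerm {α ι : Type*} [Fintype α] (g h : α → ι)
    (hc : ∀ j, Nat.card {x // g x = j} = Nat.card {x // h x = j}) :
    ∃ P : Equiv.Perm α, ∀ x, h (P x) = g x := by
  have e : ∀ j, {x // g x = j} ≃ {x // h x = j} := fun j => Fintype.equivOfCardEq
    (by rw [← Nat.card_eq_fintype_card, ← Nat.card_eq_fintype_card]; exact hc j)
  refine ⟨(Equiv.sigmaFiberEquiv g).symm.trans
    ((Equiv.sigmaCongrRight e).trans (Equiv.sigmaFiberEquiv h)), fun x => ?_⟩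
  exact ((e (g x)) ⟨x, rfl⟩).2

open Classical in
/-- Each fiber of a nonzero linear functional on a `p^m`-element vector space has
`p^(m-1)` elements. -/
lemma fiberCard {p m : ℕ} [Fact p.Prime] (hm : 0 < m) {W : Type*} [AddCommGroup W]
    [Module (ZMod p) W] [Fintype W] (hcW : Fintype.card W = p ^ m)
    (L : W →ₗ[ZMod p] ZMod p) (hL : ∃ w0, L w0 ≠ 0) (j : ZMod p) :
    Nat.card {w : W // L w = j} = p ^ (m - 1) := by
  obtain ⟨w0, hw0⟩ := hL
  have key : ∀ j1 j2 : ZMod p,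
      Nat.card {w : W // L w = j1} = Nat.card {w : W // L w = j2} := by
    intro j1 j2
    refine Nat.card_congr ⟨fun u => ⟨u.1 + ((j2 - j1) * (L w0)⁻¹) • w0, ?_⟩,
      fun u => ⟨u.1 - ((j2 - j1) * (L w0)⁻¹) • w0, ?_⟩, fun u => ?_, fun u => ?_⟩
    · have := u.2
      simp [map_add, map_smul, this, smul_eq_mul, mul_assoc, inv_mul_cancel₀ hw0]
    · have := u.2
      simp [map_sub, map_smul, this, smul_eq_mul, mul_assoc, inv_mul_cancel₀ hw0]
    · apply Subtype.ext; simp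
    · apply Subtype.ext; simp
  have hsum : ∑ j : ZMod p, Nat.card {w : W // L w = j} = p ^ m := by
    simp only [Nat.card_eq_fintype_card]
    rw [← Fintype.card_sigma, Fintype.card_congr (Equiv.sigmaFiberEquiv L), hcW]
  have hconst : ∑ j' : ZMod p, Nat.card {w : W // L w = j'}
      = p * Nat.card {w : W // L w = j} := by
    rw [Finset.sum_congr rfl (fun j' _ => key j' j), Finset.sum_const, Finset.card_univ,
      ZMod.card, smul_eq_mul]
  have hp : 0 < p := (Fact.out : p.Prime).pos
  have hmain : p * Nat.card {w : W // L w = j} = p * p ^ (m - 1) := by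
    rw [← hconst, hsum, ← pow_succ', Nat.sub_add_cancel hm]
  exact Nat.eq_of_mul_eq_mul_left hp hmain

/-- With `F : V → W` inducing the partition `Γ = {F⁻¹(i) : i ∈ W}`,
`Γ` is a bent partition if and only if for every permutation `P` of `W`, `P ∘ F` is a
vectorial bent function (every nonzero component `x ↦ ⟨c, P(F(x))⟩` is bent). -/
theorem stmt15 (p n m : ℕ) [Fact p.Prime] [NeZero p] (hn : Even n) (hm : 0 < m)
    (V W : Type*) [AddCommGroup V] [Module (ZMod p) V] [Fintype V]
    [AddCommGroup W] [Module (ZMod p) W] [Fintype W] [DecidableEq W]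
    (hcV : Fintype.card V = p ^ n) (hcW : Fintype.card W = p ^ m)
    (φV : V →ₗ[ZMod p] V →ₗ[ZMod p] ZMod p)
    (hndV : ∀ v : V, (∀ w : V, φV v w = 0) → v = 0)
    (φW : W →ₗ[ZMod p] W →ₗ[ZMod p] ZMod p)
    (hndW : ∀ v : W, (∀ w : W, φW v w = 0) → v = 0)
    (F : V → W) :
    (∀ f : V → ZMod p,
        (∀ j : ZMod p, ∃ S : Finset W, S.card = p ^ (m - 1) ∧
          ∀ x : V, f x = j ↔ F x ∈ S) →
        ∀ a : V,
          ‖∑ x : V,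
            Complex.exp (2 * Real.pi * Complex.I / p) ^ ((f x - φV a x).val)‖ =
            (p : ℝ) ^ (n / 2)) ↔
      (∀ P : Equiv.Perm W, ∀ c : W, c ≠ 0 → ∀ a : V,
        ‖∑ x : V,
          Complex.exp (2 * Real.pi * Complex.I / p) ^
            ((φW c (P (F x)) - φV a x).val)‖ = (p : ℝ) ^ (n / 2)) := by
  classical
  constructor
  · intro hbp P c hc a
    have hLne : ∃ w0, φW c w0 ≠ 0 := by
      by_contra h
      push_neg at h
      exact hc (hndW c h)
    refine hbp (fun x => φW c (P (F x))) (fun j => ?_) a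
    refine ⟨Finset.univ.filter (fun w => φW c (P w) = j), ?_, fun x => ?_⟩
    · have h1 : (Nat.card {w : W // φW c (P w) = j}) = p ^ (m - 1) := by
        rw [Nat.card_congr ((Equiv.subtypeEquiv P (fun w => Iff.rfl)) :
          {w : W // φW c (P w) = j} ≃ {w : W // φW c w = j})]
        exact fiberCard hm hcW (φW c) hLne j
      rw [← h1, Nat.card_eq_fintype_card, Fintype.card_subtype]
    · simp
  · intro hvb f hf a
    choose S hS1 hS2 using hf
    have hnt : Nontrivial W := Fintype.one_lt_card_iff_nontrivial.mp (by
      rw [hcW]; exact Nat.one_lt_pow hm.ne' (Fact.out : p.Prime).one_lt)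
    obtain ⟨c, hc⟩ := exists_ne (0 : W)
    have hLne : ∃ w0, φW c w0 ≠ 0 := by
      by_contra h; push_neg at h; exact hc (hndW c h)
    have hwd : ∀ x y : V, F x = F y → f x = f y := by
      intro x y hxy
      have h1 : F y ∈ S (f y) := (hS2 (f y) y).mp rfl
      exact (hS2 (f y) x).mpr (hxy ▸ h1)
    set In : W → Prop := fun w => ∃ x, F x = w with hIn
    set lab : W → ZMod p := fun w => if h : In w then f h.choose else 0 with hlab
    have hlabF : ∀ x, lab (F x) = f x := by
      intro x
      have h : In (F x) := ⟨x, rfl⟩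
      simp only [hlab, dif_pos h]
      exact hwd _ _ h.choose_spec
    have hIm : ∀ j, Nat.card {w : W // In w ∧ lab w = j} ≤ p ^ (m - 1) := by
      intro j
      have hsub : ∀ w : W, (In w ∧ lab w = j) → w ∈ S j := by
        rintro w ⟨⟨x, hx⟩, hl⟩
        have hfx : f x = j := by rw [← hlabF x, hx, hl]
        exact hx ▸ (hS2 j x).mp hfx
      calc Nat.card {w : W // In w ∧ lab w = j}
          ≤ Nat.card {w : W // w ∈ S j} := by
            rw [Nat.card_eq_fintype_card, Nat.card_eq_fintype_card]
            exact Fintype.card_subtype_mono _ _ hsub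
        _ = (S j).card := Nat.card_eq_finsetCard _
        _ = p ^ (m - 1) := hS1 j
    set cIm : ZMod p → ℕ := fun j => Nat.card {w : W // In w ∧ lab w = j} with hcIm
    have hsumIm : ∑ j : ZMod p, cIm j = Nat.card {w : W // In w} := by
      rw [hcIm]
      simp only [Nat.card_eq_fintype_card]
      rw [← Fintype.card_sigma]
      exact Fintype.card_congr ((Equiv.sigmaCongrRight (fun j =>
        (Equiv.subtypeSubtypeEquivSubtypeInter In (fun w => lab w = j)).symm)).trans
        (Equiv.sigmaFiberEquiv (fun u : {w : W // In w} => lab u.1)))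
    set d : ZMod p → ℕ := fun j => p ^ (m - 1) - cIm j with hd
    have hdsum : ∀ j, cIm j + d j = p ^ (m - 1) := fun j => Nat.add_sub_cancel' (hIm j)
    have hsplit : Nat.card {w : W // In w} + Nat.card {w : W // ¬ In w}
        = Fintype.card W := by
      simp only [Nat.card_eq_fintype_card]
      rw [Fintype.card_subtype, Fintype.card_subtype, ← Finset.card_univ]
      exact Finset.card_filter_add_card_filter_not _
    have hdtot : ∑ j : ZMod p, d j = Nat.card {w : W // ¬ In w} := by
      have h1 : ∑ j : ZMod p, (cIm j + d j) = p ^ m := by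
        rw [Finset.sum_congr rfl (fun j _ => hdsum j), Finset.sum_const, Finset.card_univ,
          ZMod.card, smul_eq_mul, ← pow_succ', Nat.sub_add_cancel hm]
      rw [Finset.sum_add_distrib, hsumIm] at h1
      omega
    obtain ⟨g0, hg0⟩ := existsFun d hdtot
    set g : W → ZMod p := fun w => if h : In w then lab w else g0 ⟨w, h⟩ with hg
    have hgF : ∀ x, g (F x) = f x := fun x => by
      simp only [hg, dif_pos (⟨x, rfl⟩ : In (F x))]
      exact (dif_pos (⟨x, rfl⟩ : In (F x))).trans (hlabF x)
    have hgfib : ∀ j, Nat.card {w : W // g w = j} = p ^ (m - 1) := by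
      intro j
      have e1 : ∀ w : W, g w = j ↔ ((In w ∧ lab w = j) ∨ ∃ h : ¬ In w, g0 ⟨w, h⟩ = j) := by
        intro w
        by_cases h : In w
        · simp only [hg, dif_pos h]
          constructor
          · intro hl; exact Or.inl ⟨h, hl⟩
          · rintro (⟨_, hl⟩ | ⟨hn, _⟩)
            · exact hl
            · exact absurd h hn
        · simp only [hg, dif_neg h]
          constructor
          · intro hl; exact Or.inr ⟨h, hl⟩
          · rintro (⟨hi, _⟩ | ⟨hn, hl⟩)
            · exact absurd hi h
            · exact hl
      have e2 : {w : W // ∃ h : ¬ In w, g0 ⟨w, h⟩ = j} ≃ {u : {w : W // ¬ In w} // g0 u = j} :=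
        ⟨fun s => ⟨⟨s.1, s.2.choose⟩, s.2.choose_spec⟩,
         fun u => ⟨u.1.1, u.1.2, u.2⟩,
         fun s => Subtype.ext rfl, fun u => Subtype.ext (Subtype.ext rfl)⟩
      have hdisj : Disjoint (fun w : W => In w ∧ lab w = j)
          (fun w : W => ∃ h : ¬ In w, g0 ⟨w, h⟩ = j) := by
        rw [disjoint_iff_inf_le]
        rintro w ⟨⟨hi, -⟩, hn, -⟩
        exact absurd hi hn
      rw [Nat.card_congr (Equiv.subtypeEquivRight e1)]
      have hadd : Nat.card {w : W // (In w ∧ lab w = j) ∨ ∃ h : ¬ In w, g0 ⟨w, h⟩ = j}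
          = cIm j + Nat.card {u : {w : W // ¬ In w} // g0 u = j} := by
        rw [hcIm]
        simp only [Nat.card_eq_fintype_card]
        rw [Fintype.card_subtype_or_disjoint _ _ hdisj]
        congr 1
        exact Fintype.card_congr e2
      rw [hadd, hg0 j]
      exact hdsum j
    obtain ⟨P, hP⟩ := fiberPerm g (fun w => φW c w) (fun j => by
      rw [hgfib j]
      exact (fiberCard hm hcW (φW c) hLne j).symm)
    have hfx : ∀ x, f x = φW c (P (F x)) := fun x => by rw [hP (F x), hgF x]
    have hsum : (∑ x : V, Complex.exp (2 * Real.pi * Complex.I / p) ^ ((f x - φV a x).val))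
        = ∑ x : V, Complex.exp (2 * Real.pi * Complex.I / p) ^
            ((φW c (P (F x)) - φV a x).val) :=
      Finset.sum_congr rfl (fun x _ => by rw [hfx x])
    rw [hsum]
    exact hvb P c hc a
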